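/- arXiv:1801.02425 — 4 statements merged into one kernel-verified Lean document; each statement's English description precedes it below -/
import Mathlib

section
/- Under hypotheses (h1), (g1), with N ≥ 3, a, b nonnegative continuous functions on [0,∞), and u₀ ≥ s₀, every term of the iteration sequence u_0(r) := u₀, u_n(r) := u₀ + ∫₀^r t^{1-N} ∫₀^t s^{N-1} (a(s) h(u_{n-1}(s)) + b(s) g(u_{n-1}(s))) ds dt satisfies H(u_n(r)) ≤ P̄(r) for all n ∈ ℕ and r ≥ 0, where H(t) := ∫_{u₀}^t ds/(h(s)+g(s)) and P̄(r) := ∫₀^r t^{1-N} ∫₀^t s^{N-1} (a(s) + b(s)) ds dt. -/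
open MeasureTheory Filter Set

-- Auxiliary lemmas

private lemma aux_intInt {F : ℝ → ℝ} (hF : ContinuousOn F (Set.Ici 0))
    {x y : ℝ} (hx : 0 ≤ x) (hy : 0 ≤ y) : IntervalIntegrable F volume x y :=
  (hF.mono (fun t ht => le_trans (le_min hx hy) ht.1)).intervalIntegrable

private lemma aux_prim_cont {F : ℝ → ℝ} (hF : ContinuousOn F (Set.Ici 0)) :
    ContinuousOn (fun r => ∫ t in (0:ℝ)..r, F t) (Set.Ici 0) := by
  intro x hx
  have hx0 : (0:ℝ) ≤ x := hx
  have h1 : ContinuousOn (fun r => ∫ t in (0:ℝ)..r, F t) (Set.Icc 0 (x+1)) := by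
    have hii : IntegrableOn F (Set.uIcc 0 (x+1)) volume := by
      rw [Set.uIcc_of_le (by linarith)]
      exact (hF.mono (fun t ht => ht.1)).integrableOn_Icc
    have := intervalIntegral.continuousOn_primitive_interval hii
    rwa [Set.uIcc_of_le (by linarith)] at this
  have hmem : Set.Icc (0:ℝ) (x+1) ∈ nhdsWithin x (Set.Ici 0) := by
    rw [← Set.Ici_inter_Iic]
    exact Filter.inter_mem self_mem_nhdsWithin
      (mem_nhdsWithin_of_mem_nhds (Iic_mem_nhds (by linarith)))
  exact (h1 x ⟨hx0, by linarith⟩).mono_of_mem_nhdsWithin hmem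

private lemma aux_prim_deriv {F : ℝ → ℝ} (hF : ContinuousOn F (Set.Ici 0))
    {x : ℝ} (hx : 0 < x) :
    HasDerivAt (fun r => ∫ t in (0:ℝ)..r, F t) (F x) x := by
  have hF' : ContinuousOn F (Set.Ioi 0) := hF.mono (fun t ht => Set.mem_Ici.mpr (le_of_lt (Set.mem_Ioi.mp ht)))
  refine intervalIntegral.integral_hasDerivAt_right (aux_intInt hF le_rfl hx.le) ?_ ?_
  · exact ContinuousOn.stronglyMeasurableAtFilter isOpen_Ioi hF' x hx
  · exact hF'.continuousAt (isOpen_Ioi.mem_nhds hx)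

private lemma aux_zpow_mul_pow {N : ℕ} (hN : 3 ≤ N) {t : ℝ} (ht : 0 < t) :
    t ^ (1 - (N:ℤ)) * t ^ (N - 1) = 1 := by
  rw [← zpow_natCast t (N - 1), ← zpow_add₀ ht.ne']
  rw [show (1 - (N:ℤ)) + ((N - 1 : ℕ) : ℤ) = 0 by push_cast [Nat.cast_sub (by omega : 1 ≤ N)]; ring]
  exact zpow_zero t

/-- Key continuity of `t ↦ t^(1-N) * ∫₀^t s^(N-1) c s` on `[0,∞)`. -/
private lemma aux_f_cont {N : ℕ} (hN : 3 ≤ N) {c : ℝ → ℝ}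
    (hc : ContinuousOn c (Set.Ici 0)) (hcn : ∀ s, 0 ≤ s → 0 ≤ c s) :
    ContinuousOn (fun t => t ^ (1 - (N:ℤ)) * ∫ s in (0:ℝ)..t, s ^ (N - 1) * c s)
      (Set.Ici 0) := by
  have hNz : (1 - (N:ℤ)) ≠ 0 := by omega
  have hsc : ContinuousOn (fun s => s ^ (N - 1) * c s) (Set.Ici 0) :=
    (continuous_pow _).continuousOn.mul hc
  have hscn : ∀ s, 0 ≤ s → 0 ≤ s ^ (N - 1) * c s := fun s hs =>
    mul_nonneg (pow_nonneg hs _) (hcn s hs)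
  have hK : ContinuousOn (fun t => ∫ s in (0:ℝ)..t, s ^ (N - 1) * c s) (Set.Ici 0) :=
    aux_prim_cont hsc
  have hKn : ∀ t, 0 ≤ t → 0 ≤ ∫ s in (0:ℝ)..t, s ^ (N - 1) * c s := fun t ht =>
    intervalIntegral.integral_nonneg ht (fun u hu => hscn u hu.1)
  intro x hx
  rcases eq_or_lt_of_le (Set.mem_Ici.mp hx : (0:ℝ) ≤ x) with hx0 | hx0
  · -- continuity at 0 within Ici 0 via squeeze
    subst hx0
    obtain ⟨M, hM⟩ := (isCompact_Icc (a := (0:ℝ)) (b := 1)).exists_bound_of_continuousOn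
      (hc.mono (fun t ht => ht.1))
    have hf0 : (fun t => t ^ (1 - (N:ℤ)) * ∫ s in (0:ℝ)..t, s ^ (N - 1) * c s) 0 = 0 := by
      simp [zero_zpow _ hNz]
    have hub : ∀ t ∈ Set.Icc (0:ℝ) 1,
        t ^ (1 - (N:ℤ)) * (∫ s in (0:ℝ)..t, s ^ (N - 1) * c s) ≤ M * t := by
      intro t ht
      rcases eq_or_lt_of_le ht.1 with h0 | h0
      · rw [← h0]; simp [zero_zpow _ hNz]
      · have hKb : (∫ s in (0:ℝ)..t, s ^ (N - 1) * c s) ≤ t ^ (N - 1) * (t * M) := by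
          have := intervalIntegral.integral_mono_on (μ := volume) ht.1
            (aux_intInt hsc le_rfl ht.1) intervalIntegrable_const
            (f := fun s => s ^ (N - 1) * c s) (g := fun _ => t ^ (N - 1) * M)
            (by
              intro s hs
              have h1 : s ^ (N - 1) ≤ t ^ (N - 1) := pow_le_pow_left₀ hs.1 hs.2 _
              have h2 : c s ≤ M := by
                have := hM s ⟨hs.1, hs.2.trans ht.2⟩
                calc c s ≤ |c s| := le_abs_self _
                  _ = ‖c s‖ := (Real.norm_eq_abs _).symm
                  _ ≤ M := this
              exact mul_le_mul h1 h2 (hcn s hs.1) (pow_nonneg ht.1 _))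
          simpa using this
        calc t ^ (1 - (N:ℤ)) * (∫ s in (0:ℝ)..t, s ^ (N - 1) * c s)
            ≤ t ^ (1 - (N:ℤ)) * (t ^ (N - 1) * (t * M)) :=
              mul_le_mul_of_nonneg_left hKb (zpow_nonneg ht.1 _)
          _ = (t ^ (1 - (N:ℤ)) * t ^ (N - 1)) * (t * M) := by ring
          _ = M * t := by rw [aux_zpow_mul_pow hN h0]; ring
    have hlb : ∀ t ∈ Set.Icc (0:ℝ) 1,
        (0:ℝ) ≤ t ^ (1 - (N:ℤ)) * ∫ s in (0:ℝ)..t, s ^ (N - 1) * c s := by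
      intro t ht
      exact mul_nonneg (zpow_nonneg ht.1 _) (hKn t ht.1)
    have hmem : Set.Icc (0:ℝ) 1 ∈ nhdsWithin 0 (Set.Ici 0) := by
      rw [← Set.Ici_inter_Iic]
      exact Filter.inter_mem self_mem_nhdsWithin
        (mem_nhdsWithin_of_mem_nhds (Iic_mem_nhds one_pos))
    have hMt : Filter.Tendsto (fun t : ℝ => M * t) (nhdsWithin 0 (Set.Ici 0)) (nhds 0) := by
      have : Filter.Tendsto (fun t : ℝ => M * t) (nhds 0) (nhds 0) := by
        have h1 : Continuous (fun t : ℝ => M * t) := continuous_const.mul continuous_id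
        have := h1.tendsto 0
        simpa using this
      exact this.mono_left nhdsWithin_le_nhds
    have : Filter.Tendsto (fun t => t ^ (1 - (N:ℤ)) * ∫ s in (0:ℝ)..t, s ^ (N - 1) * c s)
        (nhdsWithin 0 (Set.Ici 0)) (nhds 0) := by
      apply tendsto_of_tendsto_of_tendsto_of_le_of_le' tendsto_const_nhds hMt
      · filter_upwards [hmem] with t ht using hlb t ht
      · filter_upwards [hmem] with t ht using hub t ht
    unfold ContinuousWithinAt
    rwa [hf0]
  · -- continuity at x > 0
    have h1 : ContinuousAt (fun t : ℝ => t ^ (1 - (N:ℤ))) x :=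
      continuousAt_zpow₀ x _ (Or.inl hx0.ne')
    exact (h1.continuousWithinAt).mul (hK x hx)

theorem stmt3 (N : ℕ) (hN : 3 ≤ N)
    (a b : ℝ → ℝ)
    (ha_cont : ContinuousOn a (Set.Ici 0)) (ha_nonneg : ∀ s ∈ Set.Ici (0:ℝ), 0 ≤ a s)
    (hb_cont : ContinuousOn b (Set.Ici 0)) (hb_nonneg : ∀ s ∈ Set.Ici (0:ℝ), 0 ≤ b s)
    (h g : ℝ → ℝ) (s₀ : ℝ) (hs₀ : 0 < s₀)
    (hh_cont : ContinuousOn h (Set.Ici 0)) (hh_mono : MonotoneOn h (Set.Ici 0))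
    (hh_nonneg : ∀ s ∈ Set.Ici (0:ℝ), 0 ≤ h s)
    (hh0 : h 0 = 0) (hh_pos : ∀ s : ℝ, 0 < s → 0 < h s)
    (hg_cont : ContinuousOn g (Set.Ioi 0))
    (hg_mono : MonotoneOn g (Set.Ioi s₀))
    (hg_lim : Filter.Tendsto g (nhdsWithin 0 (Set.Ioi 0)) (nhds 0))
    (hg_s0 : g s₀ = 0)
    (hg_neg : ∀ s ∈ Set.Ioo 0 s₀, g s < 0)
    (hg_pos : ∀ s ∈ Set.Ioi s₀, 0 < g s)
    (u₀ : ℝ) (hu₀ : s₀ ≤ u₀)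
    (U : ℕ → ℝ → ℝ) (hU0 : ∀ r : ℝ, U 0 r = u₀)
    (hUrec : ∀ n : ℕ, ∀ r : ℝ, U (n + 1) r =
      u₀ + ∫ t in (0:ℝ)..r, t ^ (1 - (N:ℤ)) *
        ∫ s in (0:ℝ)..t, s ^ (N - 1) * (a s * h (U n s) + b s * g (U n s)))
    :
    ∀ n : ℕ, ∀ r : ℝ, 0 ≤ r →
      (∫ s in u₀..(U n r), 1 / (h s + g s)) ≤
        ∫ t in (0:ℝ)..r, t ^ (1 - (N:ℤ)) *
          ∫ s in (0:ℝ)..t, s ^ (N - 1) * (a s + b s) := by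
  have hu₀pos : (0:ℝ) < u₀ := lt_of_lt_of_le hs₀ hu₀
  -- g is nonnegative on [s₀, ∞)
  have hg0 : ∀ s, s₀ ≤ s → 0 ≤ g s := by
    intro s hs
    rcases eq_or_lt_of_le hs with rfl | hlt
    · rw [← hg_s0]
    · exact (hg_pos s hlt).le
  -- h monotone pointwise on [u₀,∞)
  have hhm : ∀ x y, u₀ ≤ x → x ≤ y → h x ≤ h y := by
    intro x y hx hxy
    exact hh_mono (Set.mem_Ici.mpr (by linarith)) (Set.mem_Ici.mpr (by linarith)) hxy
  -- g monotone pointwise on [u₀,∞)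
  have hgm : ∀ x y, u₀ ≤ x → x ≤ y → g x ≤ g y := by
    intro x y hx hxy
    have hx0 : s₀ ≤ x := le_trans hu₀ hx
    rcases eq_or_lt_of_le hx0 with rfl | hlt
    · rw [hg_s0]; exact hg0 _ (le_trans le_rfl hxy)
    · rcases eq_or_lt_of_le hxy with rfl | hlt2
      · exact le_rfl
      · exact hg_mono hlt (hlt.trans hlt2) hxy
  have hGmono : ∀ x y, u₀ ≤ x → x ≤ y → h x + g x ≤ h y + g y := by
    intro x y hx hxy
    have := hhm x y hx hxy; have := hgm x y hx hxy; linarith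
  have hGpos : ∀ x, u₀ ≤ x → 0 < h x + g x := by
    intro x hx
    have h1 : 0 < h x := hh_pos x (by linarith)
    have h2 : 0 ≤ g x := hg0 x (le_trans hu₀ hx)
    linarith
  -- φ is continuous on [u₀,∞)
  have hφ_cont : ContinuousOn (fun s => 1 / (h s + g s)) (Set.Ici u₀) := by
    apply ContinuousOn.div continuousOn_const
    · exact (hh_cont.mono (fun x hx => le_trans hu₀pos.le hx)).add
        (hg_cont.mono (fun x hx => lt_of_lt_of_le hu₀pos hx))
    · intro x hx; exact (hGpos x hx).ne'
  -- facts about the integrand c_n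
  have cfacts : ∀ n : ℕ, ContinuousOn (U n) (Set.Ici 0) → (∀ r, 0 ≤ r → u₀ ≤ U n r) →
      ContinuousOn (fun s => a s * h (U n s) + b s * g (U n s)) (Set.Ici 0) ∧
      (∀ s, 0 ≤ s → 0 ≤ a s * h (U n s) + b s * g (U n s)) := by
    intro n hcont hlb
    constructor
    · apply ContinuousOn.add
      · exact ha_cont.mul (hh_cont.comp hcont
          (fun s hs => Set.mem_Ici.mpr (le_trans hu₀pos.le (hlb s hs))))
      · exact hb_cont.mul (hg_cont.comp hcont
          (fun s hs => Set.mem_Ioi.mpr (lt_of_lt_of_le hu₀pos (hlb s hs))))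
    · intro s hs
      have h1 : 0 ≤ h (U n s) := hh_nonneg _ (Set.mem_Ici.mpr (le_trans hu₀pos.le (hlb s hs)))
      have h2 : 0 ≤ g (U n s) := hg0 _ (le_trans hu₀ (hlb s hs))
      exact add_nonneg (mul_nonneg (ha_nonneg s hs) h1) (mul_nonneg (hb_nonneg s hs) h2)
  -- one step of the iteration
  have step : ∀ n : ℕ, ContinuousOn (U n) (Set.Ici 0) → (∀ r, 0 ≤ r → u₀ ≤ U n r) →
      ContinuousOn (U (n+1)) (Set.Ici 0) ∧ (∀ r, 0 ≤ r → u₀ ≤ U (n+1) r) ∧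
      MonotoneOn (U (n+1)) (Set.Ici 0) := by
    intro n hcont hlb
    obtain ⟨hc_cont, hc_nn⟩ := cfacts n hcont hlb
    have hf_cont := aux_f_cont hN hc_cont hc_nn
    have hf_nn : ∀ t, 0 ≤ t →
        0 ≤ t ^ (1 - (N:ℤ)) * ∫ s in (0:ℝ)..t, s ^ (N - 1) *
          (a s * h (U n s) + b s * g (U n s)) := by
      intro t ht
      refine mul_nonneg (zpow_nonneg ht _) (intervalIntegral.integral_nonneg ht ?_)
      intro u hu
      exact mul_nonneg (pow_nonneg hu.1 _) (hc_nn u hu.1)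
    refine ⟨?_, ?_, ?_⟩
    · exact (continuousOn_const.add (aux_prim_cont hf_cont)).congr (fun r _ => hUrec n r)
    · intro r hr
      rw [hUrec n r]
      have : 0 ≤ ∫ t in (0:ℝ)..r, t ^ (1 - (N:ℤ)) * ∫ s in (0:ℝ)..t, s ^ (N - 1) *
          (a s * h (U n s) + b s * g (U n s)) :=
        intervalIntegral.integral_nonneg hr (fun u hu => hf_nn u hu.1)
      linarith
    · intro x hx y hy hxy
      rw [hUrec n x, hUrec n y]
      have hx0 : (0:ℝ) ≤ x := hx
      have hy0 : (0:ℝ) ≤ y := hy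
      have hadd := intervalIntegral.integral_add_adjacent_intervals (μ := volume)
        (aux_intInt hf_cont le_rfl hx0) (aux_intInt hf_cont hx0 hy0)
      have hpos : 0 ≤ ∫ t in x..y, t ^ (1 - (N:ℤ)) * ∫ s in (0:ℝ)..t, s ^ (N - 1) *
          (a s * h (U n s) + b s * g (U n s)) :=
        intervalIntegral.integral_nonneg hxy (fun u hu => hf_nn u (hx0.trans hu.1))
      linarith [hadd]
  -- comparison step: U n ≤ U (n+1) propagates
  have mono_step : ∀ n : ℕ, ContinuousOn (U n) (Set.Ici 0) → (∀ r, 0 ≤ r → u₀ ≤ U n r) →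
      ContinuousOn (U (n+1)) (Set.Ici 0) → (∀ r, 0 ≤ r → u₀ ≤ U (n+1) r) →
      (∀ r, 0 ≤ r → U n r ≤ U (n+1) r) →
      (∀ r, 0 ≤ r → U (n+1) r ≤ U (n+2) r) := by
    intro n hc hl hc' hl' hle r hr
    rw [hUrec n r, hUrec (n+1) r]
    apply (add_le_add_iff_left u₀).mpr
    obtain ⟨hc_cont, hc_nn⟩ := cfacts n hc hl
    obtain ⟨hc'_cont, hc'_nn⟩ := cfacts (n+1) hc' hl'
    have hf_cont := aux_f_cont hN hc_cont hc_nn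
    have hf'_cont := aux_f_cont hN hc'_cont hc'_nn
    apply intervalIntegral.integral_mono_on hr (aux_intInt hf_cont le_rfl hr)
      (aux_intInt hf'_cont le_rfl hr)
    intro t ht
    apply mul_le_mul_of_nonneg_left ?_ (zpow_nonneg ht.1 _)
    apply intervalIntegral.integral_mono_on ht.1
      (aux_intInt ((continuous_pow _).continuousOn.mul hc_cont) le_rfl ht.1)
      (aux_intInt ((continuous_pow _).continuousOn.mul hc'_cont) le_rfl ht.1)
    intro s hs
    apply mul_le_mul_of_nonneg_left ?_ (pow_nonneg hs.1 _)
    have h1 : h (U n s) ≤ h (U (n+1) s) := hhm _ _ (hl s hs.1) (hle s hs.1)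
    have h2 : g (U n s) ≤ g (U (n+1) s) := hgm _ _ (hl s hs.1) (hle s hs.1)
    have h3 := ha_nonneg s hs.1
    have h4 := hb_nonneg s hs.1
    nlinarith
  -- all the facts by induction
  have props : ∀ n : ℕ, ContinuousOn (U n) (Set.Ici 0) ∧ (∀ r, 0 ≤ r → u₀ ≤ U n r) ∧
      MonotoneOn (U n) (Set.Ici 0) ∧ (∀ r, 0 ≤ r → U n r ≤ U (n+1) r) := by
    intro n
    induction n with
    | zero =>
      have hc : ContinuousOn (U 0) (Set.Ici 0) := continuousOn_const.congr (fun r _ => hU0 r)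
      have hl : ∀ r, 0 ≤ r → u₀ ≤ U 0 r := fun r _ => (hU0 r).ge
      refine ⟨hc, hl, ?_, ?_⟩
      · intro x hx y hy hxy; rw [hU0, hU0]
      · intro r hr; rw [hU0 r]; exact (step 0 hc hl).2.1 r hr
    | succ n ih =>
      obtain ⟨hc, hl, hm, hle⟩ := ih
      obtain ⟨hc', hl', hm'⟩ := step n hc hl
      exact ⟨hc', hl', hm', mono_step n hc hl hc' hl' hle⟩
  -- facts about the right-hand side integrand
  have hab_cont : ContinuousOn (fun s => a s + b s) (Set.Ici 0) := ha_cont.add hb_cont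
  have hab_nn : ∀ s, 0 ≤ s → 0 ≤ a s + b s := fun s hs =>
    add_nonneg (ha_nonneg s hs) (hb_nonneg s hs)
  have hfbar_cont := aux_f_cont hN hab_cont hab_nn
  have hfbar_nn : ∀ t, 0 ≤ t →
      0 ≤ t ^ (1 - (N:ℤ)) * ∫ s in (0:ℝ)..t, s ^ (N - 1) * (a s + b s) := by
    intro t ht
    refine mul_nonneg (zpow_nonneg ht _) (intervalIntegral.integral_nonneg ht ?_)
    intro u hu
    exact mul_nonneg (pow_nonneg hu.1 _) (hab_nn u hu.1)
  -- main proof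
  intro n r hr
  match n with
  | 0 =>
    rw [hU0 r, intervalIntegral.integral_same]
    exact intervalIntegral.integral_nonneg hr (fun u hu => hfbar_nn u hu.1)
  | Nat.succ n =>
    obtain ⟨hc, hl, hm, hle⟩ := props n
    obtain ⟨hc', hl', hm', _⟩ := props (n+1)
    obtain ⟨hcc_cont, hcc_nn⟩ := cfacts n hc hl
    have hf_cont := aux_f_cont hN hcc_cont hcc_nn
    have hf_nn : ∀ t, 0 ≤ t →
        0 ≤ t ^ (1 - (N:ℤ)) * ∫ s in (0:ℝ)..t, s ^ (N - 1) *
          (a s * h (U n s) + b s * g (U n s)) := by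
      intro t ht
      refine mul_nonneg (zpow_nonneg ht _) (intervalIntegral.integral_nonneg ht ?_)
      intro u hu
      exact mul_nonneg (pow_nonneg hu.1 _) (hcc_nn u hu.1)
    have hU10 : U (n+1) 0 = u₀ := by rw [hUrec n 0]; simp
    have huIcc : Set.uIcc (0:ℝ) r = Set.Icc 0 r := Set.uIcc_of_le hr
    -- the substitution
    have hsubst : (∫ s in u₀..(U (n+1) r), 1 / (h s + g s)) =
        ∫ t in (0:ℝ)..r, (t ^ (1 - (N:ℤ)) * ∫ s in (0:ℝ)..t, s ^ (N - 1) *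
          (a s * h (U n s) + b s * g (U n s))) *
          (1 / (h (U (n+1) t) + g (U (n+1) t))) := by
      have := intervalIntegral.integral_comp_smul_deriv'' (a := (0:ℝ)) (b := r)
        (f := U (n+1))
        (f' := fun t => t ^ (1 - (N:ℤ)) * ∫ s in (0:ℝ)..t, s ^ (N - 1) *
          (a s * h (U n s) + b s * g (U n s)))
        (g := fun s => 1 / (h s + g s))
        (by rw [huIcc]; exact hc'.mono (fun t ht => ht.1))
        ?_ (by rw [huIcc]; exact hf_cont.mono (fun t ht => ht.1)) ?_
      · rw [hU10] at this
        rw [← this]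
        simp [smul_eq_mul]
      · intro x hx
        rw [min_eq_left hr, max_eq_right hr] at hx
        have hd : HasDerivAt (fun u => u₀ + ∫ t in (0:ℝ)..u,
            t ^ (1 - (N:ℤ)) * ∫ s in (0:ℝ)..t, s ^ (N - 1) *
              (a s * h (U n s) + b s * g (U n s)))
            (x ^ (1 - (N:ℤ)) * ∫ s in (0:ℝ)..x, s ^ (N - 1) *
              (a s * h (U n s) + b s * g (U n s))) x :=
          (aux_prim_deriv hf_cont hx.1).const_add u₀
        have heq : U (n+1) = fun u => u₀ + ∫ t in (0:ℝ)..u,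
            t ^ (1 - (N:ℤ)) * ∫ s in (0:ℝ)..t, s ^ (N - 1) *
              (a s * h (U n s) + b s * g (U n s)) := funext (hUrec n)
        rw [heq]
        exact hd.hasDerivWithinAt
      · apply hφ_cont.mono
        intro y hy
        obtain ⟨t, ht, rfl⟩ := hy
        rw [huIcc] at ht
        exact Set.mem_Ici.mpr (hl' t ht.1)
    rw [hsubst]
    -- compare the two integrals
    apply intervalIntegral.integral_mono_on hr
    · apply ContinuousOn.intervalIntegrable
      rw [huIcc]
      apply ContinuousOn.mul (hf_cont.mono (fun t ht => ht.1))
      apply hφ_cont.comp (hc'.mono (fun t ht => ht.1))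
      intro t ht
      exact Set.mem_Ici.mpr (hl' t ht.1)
    · exact aux_intInt hfbar_cont le_rfl hr
    · intro t ht
      set G := h (U n t) + g (U n t) with hGdef
      have hGp : 0 < G := hGpos _ (hl t ht.1)
      have hG'p : 0 < h (U (n+1) t) + g (U (n+1) t) := hGpos _ (hl' t ht.1)
      have hb2 : 1 / (h (U (n+1) t) + g (U (n+1) t)) ≤ 1 / G :=
        one_div_le_one_div_of_le hGp (hGmono _ _ (hl t ht.1) (hle t ht.1))
      -- K t ≤ G * J t
      have hb1 : (∫ s in (0:ℝ)..t, s ^ (N - 1) * (a s * h (U n s) + b s * g (U n s)))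
          ≤ G * ∫ s in (0:ℝ)..t, s ^ (N - 1) * (a s + b s) := by
        rw [← intervalIntegral.integral_const_mul]
        apply intervalIntegral.integral_mono_on ht.1
          (aux_intInt ((continuous_pow _).continuousOn.mul hcc_cont) le_rfl ht.1)
          (aux_intInt (continuousOn_const.mul
            ((continuous_pow _).continuousOn.mul hab_cont)) le_rfl ht.1)
        intro s hs
        have hmono : U n s ≤ U n t := hm (Set.mem_Ici.mpr hs.1)
          (Set.mem_Ici.mpr ht.1) hs.2
        have h1 : h (U n s) ≤ G := by
          have := hhm _ _ (hl s hs.1) hmono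
          have := hg0 (U n t) (le_trans hu₀ (hl t ht.1))
          rw [hGdef]; linarith
        have h2 : g (U n s) ≤ G := by
          have := hgm _ _ (hl s hs.1) hmono
          have := hh_nonneg (U n t) (Set.mem_Ici.mpr (le_trans hu₀pos.le (hl t ht.1)))
          rw [hGdef]; linarith
        have h3 := ha_nonneg s hs.1
        have h4 := hb_nonneg s hs.1
        have h5 : 0 ≤ s ^ (N - 1) := pow_nonneg hs.1 _
        have hkey : a s * h (U n s) + b s * g (U n s) ≤ G * (a s + b s) := by
          nlinarith [mul_le_mul_of_nonneg_left h1 h3, mul_le_mul_of_nonneg_left h2 h4]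
        calc s ^ (N - 1) * (a s * h (U n s) + b s * g (U n s))
            ≤ s ^ (N - 1) * (G * (a s + b s)) := mul_le_mul_of_nonneg_left hkey h5
          _ = G * (s ^ (N - 1) * (a s + b s)) := by ring
      have hJnn : 0 ≤ ∫ s in (0:ℝ)..t, s ^ (N - 1) * (a s + b s) :=
        intervalIntegral.integral_nonneg ht.1
          (fun u hu => mul_nonneg (pow_nonneg hu.1 _) (hab_nn u hu.1))
      have hKnn : 0 ≤ ∫ s in (0:ℝ)..t, s ^ (N - 1) *
          (a s * h (U n s) + b s * g (U n s)) :=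
        intervalIntegral.integral_nonneg ht.1
          (fun u hu => mul_nonneg (pow_nonneg hu.1 _) (hcc_nn u hu.1))
      calc (t ^ (1 - (N:ℤ)) * ∫ s in (0:ℝ)..t, s ^ (N - 1) *
              (a s * h (U n s) + b s * g (U n s))) *
            (1 / (h (U (n+1) t) + g (U (n+1) t)))
          ≤ (t ^ (1 - (N:ℤ)) * ∫ s in (0:ℝ)..t, s ^ (N - 1) *
              (a s * h (U n s) + b s * g (U n s))) * (1 / G) :=
            mul_le_mul_of_nonneg_left hb2 (hf_nn t ht.1)
        _ ≤ (t ^ (1 - (N:ℤ)) * (G * ∫ s in (0:ℝ)..t, s ^ (N - 1) * (a s + b s))) *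
              (1 / G) := by
            apply mul_le_mul_of_nonneg_right ?_ (one_div_nonneg.mpr hGp.le)
            exact mul_le_mul_of_nonneg_left hb1 (zpow_nonneg ht.1 _)
        _ = t ^ (1 - (N:ℤ)) * ∫ s in (0:ℝ)..t, s ^ (N - 1) * (a s + b s) := by
            field_simp
end

section
/- Under hypotheses (h1), (g1), with N ≥ 3, a, b nonnegative continuous functions on [0,∞), and u₀ ≥ s₀, let u ∈ C²([0,∞)) with u ≥ u₀ satisfy u(r) = u₀ + ∫₀^r t^{1-N} ∫₀^t s^{N-1} (a(s) h(u(s)) + b(s) g(u(s))) ds dt. Then u(r) ≥ u₀ + P̲(r) for all r ≥ 0, where P̲(r) := ∫₀^r t^{1-N} ∫₀^t s^{N-1} m(s) ds dt and m(s) := a(s) h(u₀) if g(u₀) = 0, and m(s) := (a(s)+b(s)) · min{h(u₀), g(u₀)} if g(u₀) ≠ 0. Consequently, if P̲(r) → ∞ as r → ∞, then u(r) → ∞ as r → ∞, i.e., u is a large solution. -/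
open MeasureTheory Filter Set

lemma aux_integrable (N : ℕ) (hN : 1 ≤ N) (r : ℝ) (hr : 0 ≤ r) (φ : ℝ → ℝ)
    (hφ : ContinuousOn φ (Set.Icc 0 r)) :
    IntervalIntegrable (fun t => t ^ (1 - (N:ℤ)) * ∫ s in (0:ℝ)..t, s ^ (N - 1) * φ s)
      volume 0 r := by
  obtain ⟨M, hM⟩ := isCompact_Icc.exists_bound_of_continuousOn hφ
  have hψ : ContinuousOn (fun s : ℝ => s ^ (N - 1) * φ s) (Set.Icc 0 r) :=
    (continuous_pow _).continuousOn.mul hφ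
  have huIcc : Set.uIcc (0:ℝ) r = Set.Icc 0 r := Set.uIcc_of_le hr
  have hP : ContinuousOn (fun t => ∫ s in (0:ℝ)..t, s ^ (N - 1) * φ s) (Set.Icc 0 r) := by
    have := intervalIntegral.continuousOn_primitive_interval
      (f := fun s : ℝ => s ^ (N - 1) * φ s) (a := (0:ℝ)) (b := r) (μ := volume)
      (by rw [huIcc]; exact hψ.integrableOn_Icc)
    rwa [huIcc] at this
  have hG_cont : ContinuousOn
      (fun t => t ^ (1 - (N:ℤ)) * ∫ s in (0:ℝ)..t, s ^ (N - 1) * φ s) (Set.Ioc 0 r) := by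
    apply ContinuousOn.mul
    · intro t ht
      exact (continuousAt_zpow₀ t _ (Or.inl (ne_of_gt ht.1))).continuousWithinAt
    · exact hP.mono Set.Ioc_subset_Icc_self
  have hmeas := hG_cont.aestronglyMeasurable (μ := volume) measurableSet_Ioc
  have hM0 : 0 ≤ M := le_trans (norm_nonneg (φ 0)) (hM 0 ⟨le_refl 0, hr⟩)
  rw [intervalIntegrable_iff_integrableOn_Ioc_of_le hr]
  apply Integrable.mono' (g := fun _ : ℝ => M * r)
    (integrableOn_const measure_Ioc_lt_top.ne) hmeas
  refine (ae_restrict_iff' measurableSet_Ioc).mpr (ae_of_all _ ?_)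
  intro t ht
  have ht0 : 0 < t := ht.1
  have hinner : ‖∫ s in (0:ℝ)..t, s ^ (N - 1) * φ s‖ ≤ t ^ (N - 1) * M * |t - 0| := by
    apply intervalIntegral.norm_integral_le_of_norm_le_const
    intro x hx
    rw [Set.uIoc_of_le ht0.le] at hx
    have hx0 : 0 ≤ x := hx.1.le
    have hxt : x ≤ t := hx.2
    calc ‖x ^ (N - 1) * φ x‖ = x ^ (N - 1) * ‖φ x‖ := by
          rw [norm_mul, Real.norm_eq_abs, abs_of_nonneg (pow_nonneg hx0 _)]
      _ ≤ t ^ (N - 1) * M :=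
          mul_le_mul (pow_le_pow_left₀ hx0 hxt _) (hM x ⟨hx0, hxt.trans ht.2⟩)
            (norm_nonneg _) (pow_nonneg ht0.le _)
  have hzp : t ^ (1 - (N:ℤ)) * t ^ (N - 1) = 1 := by
    rw [← zpow_natCast t (N - 1), ← zpow_add₀ (ne_of_gt ht0)]
    have hcast : (1 - (N:ℤ)) + ((N - 1 : ℕ) : ℤ) = 0 := by
      have : ((N - 1 : ℕ) : ℤ) = (N : ℤ) - 1 := by
        have := hN; omega
      rw [this]; ring
    rw [hcast, zpow_zero]
  calc ‖t ^ (1 - (N:ℤ)) * ∫ s in (0:ℝ)..t, s ^ (N - 1) * φ s‖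
      = t ^ (1 - (N:ℤ)) * ‖∫ s in (0:ℝ)..t, s ^ (N - 1) * φ s‖ := by
        rw [norm_mul, Real.norm_eq_abs, abs_of_nonneg (zpow_nonneg ht0.le _)]
    _ ≤ t ^ (1 - (N:ℤ)) * (t ^ (N - 1) * M * |t - 0|) :=
        mul_le_mul_of_nonneg_left hinner (zpow_nonneg ht0.le _)
    _ = M * t := by
        rw [sub_zero, abs_of_nonneg ht0.le]
        linear_combination (M * t) * hzp
    _ ≤ M * r := mul_le_mul_of_nonneg_left ht.2 hM0

theorem stmt7 (N : ℕ) (hN : 3 ≤ N)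
    (a b : ℝ → ℝ)
    (ha_cont : ContinuousOn a (Set.Ici 0)) (ha_nonneg : ∀ s ∈ Set.Ici (0:ℝ), 0 ≤ a s)
    (hb_cont : ContinuousOn b (Set.Ici 0)) (hb_nonneg : ∀ s ∈ Set.Ici (0:ℝ), 0 ≤ b s)
    (h g : ℝ → ℝ) (s₀ : ℝ) (hs₀ : 0 < s₀)
    (hh_cont : ContinuousOn h (Set.Ici 0)) (hh_mono : MonotoneOn h (Set.Ici 0))
    (hh_nonneg : ∀ s ∈ Set.Ici (0:ℝ), 0 ≤ h s)
    (hh0 : h 0 = 0) (hh_pos : ∀ s : ℝ, 0 < s → 0 < h s)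
    (hg_cont : ContinuousOn g (Set.Ioi 0))
    (hg_mono : MonotoneOn g (Set.Ioi s₀))
    (hg_lim : Filter.Tendsto g (nhdsWithin 0 (Set.Ioi 0)) (nhds 0))
    (hg_s0 : g s₀ = 0)
    (hg_neg : ∀ s ∈ Set.Ioo 0 s₀, g s < 0)
    (hg_pos : ∀ s ∈ Set.Ioi s₀, 0 < g s)
    (u₀ : ℝ) (hu₀ : s₀ ≤ u₀)
    (u u' u'' : ℝ → ℝ)
    (hu' : ∀ r ∈ Set.Ici (0:ℝ), HasDerivWithinAt u (u' r) (Set.Ici 0) r)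
    (hu'' : ∀ r ∈ Set.Ici (0:ℝ), HasDerivWithinAt u' (u'' r) (Set.Ici 0) r)
    (hu''_cont : ContinuousOn u'' (Set.Ici 0))
    (hu_ge : ∀ r ∈ Set.Ici (0:ℝ), u₀ ≤ u r)
    (hint : ∀ r : ℝ, 0 ≤ r → u r =
      u₀ + ∫ t in (0:ℝ)..r, t ^ (1 - (N:ℤ)) *
        ∫ s in (0:ℝ)..t, s ^ (N - 1) * (a s * h (u s) + b s * g (u s)))
    (m : ℝ → ℝ)
    (hm : ∀ s : ℝ, m s = if g u₀ = 0 then a s * h u₀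
      else (a s + b s) * min (h u₀) (g u₀)) :
    (∀ r : ℝ, 0 ≤ r →
      u₀ + (∫ t in (0:ℝ)..r, t ^ (1 - (N:ℤ)) *
        ∫ s in (0:ℝ)..t, s ^ (N - 1) * m s) ≤ u r) ∧
    (Filter.Tendsto (fun r : ℝ => ∫ t in (0:ℝ)..r, t ^ (1 - (N:ℤ)) *
        ∫ s in (0:ℝ)..t, s ^ (N - 1) * m s) Filter.atTop Filter.atTop →
      Filter.Tendsto u Filter.atTop Filter.atTop) := by
  have hN1 : 1 ≤ N := by omega
  have hu₀pos : (0:ℝ) < u₀ := lt_of_lt_of_le hs₀ hu₀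
  have hu_cont : ContinuousOn u (Set.Ici 0) := fun x hx => (hu' x hx).continuousWithinAt
  have hF_cont : ContinuousOn (fun s => a s * h (u s) + b s * g (u s)) (Set.Ici 0) := by
    apply ContinuousOn.add
    · exact ha_cont.mul (hh_cont.comp hu_cont
        (fun x hx => le_trans hu₀pos.le (hu_ge x hx)))
    · exact hb_cont.mul (hg_cont.comp hu_cont
        (fun x hx => lt_of_lt_of_le hu₀pos (hu_ge x hx)))
  have hm_cont : ContinuousOn m (Set.Ici 0) := by
    have hmfun : m = fun s => if g u₀ = 0 then a s * h u₀
        else (a s + b s) * min (h u₀) (g u₀) := funext hm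
    rw [hmfun]
    by_cases hc : g u₀ = 0
    · simp only [if_pos hc]
      exact ha_cont.mul continuousOn_const
    · simp only [if_neg hc]
      exact (ha_cont.add hb_cont).mul continuousOn_const
  -- pointwise key inequality
  have hkey : ∀ s ∈ Set.Ici (0:ℝ), m s ≤ a s * h (u s) + b s * g (u s) := by
    intro s hs
    have hv : u₀ ≤ u s := hu_ge s hs
    have hv0 : u s ∈ Set.Ici (0:ℝ) := le_trans hu₀pos.le hv
    have hh_le : h u₀ ≤ h (u s) := hh_mono (Set.mem_Ici.mpr hu₀pos.le) hv0 hv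
    have hgv_nonneg : 0 ≤ g (u s) := by
      rcases eq_or_lt_of_le (le_trans hu₀ hv) with heq | hlt
      · rw [← heq, hg_s0]
      · exact (hg_pos _ hlt).le
    rw [hm s]
    split_ifs with hc
    · have h1 : a s * h u₀ ≤ a s * h (u s) :=
        mul_le_mul_of_nonneg_left hh_le (ha_nonneg s hs)
      nlinarith [mul_nonneg (hb_nonneg s hs) hgv_nonneg]
    · have hu₀gt : s₀ < u₀ := by
        rcases eq_or_lt_of_le hu₀ with heq | hlt
        · exact absurd (heq ▸ hg_s0) hc
        · exact hlt
      have hgu₀pos : 0 < g u₀ := hg_pos _ hu₀gt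
      have hg_le : g u₀ ≤ g (u s) :=
        hg_mono (Set.mem_Ioi.mpr hu₀gt) (Set.mem_Ioi.mpr (lt_of_lt_of_le hu₀gt hv)) hv
      have h1 : a s * min (h u₀) (g u₀) ≤ a s * h (u s) :=
        mul_le_mul_of_nonneg_left (le_trans (min_le_left _ _) hh_le) (ha_nonneg s hs)
      have h2 : b s * min (h u₀) (g u₀) ≤ b s * g (u s) :=
        mul_le_mul_of_nonneg_left (le_trans (min_le_right _ _) hg_le) (hb_nonneg s hs)
      nlinarith
  -- main integral comparison
  have hmain : ∀ r : ℝ, 0 ≤ r →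
      (∫ t in (0:ℝ)..r, t ^ (1 - (N:ℤ)) * ∫ s in (0:ℝ)..t, s ^ (N - 1) * m s) ≤
      ∫ t in (0:ℝ)..r, t ^ (1 - (N:ℤ)) *
        ∫ s in (0:ℝ)..t, s ^ (N - 1) * (a s * h (u s) + b s * g (u s)) := by
    intro r hr
    apply intervalIntegral.integral_mono_on hr
      (aux_integrable N hN1 r hr m (hm_cont.mono Set.Icc_subset_Ici_self))
      (aux_integrable N hN1 r hr _ (hF_cont.mono Set.Icc_subset_Ici_self))
    intro t ht
    have ht0 : (0:ℝ) ≤ t := ht.1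
    apply mul_le_mul_of_nonneg_left _ (zpow_nonneg ht0 _)
    apply intervalIntegral.integral_mono_on ht0
    · apply ContinuousOn.intervalIntegrable
      rw [Set.uIcc_of_le ht0]
      exact (continuous_pow _).continuousOn.mul
        (hm_cont.mono (fun x hx => hx.1))
    · apply ContinuousOn.intervalIntegrable
      rw [Set.uIcc_of_le ht0]
      exact (continuous_pow _).continuousOn.mul
        (hF_cont.mono (fun x hx => hx.1))
    · intro x hx
      exact mul_le_mul_of_nonneg_left (hkey x hx.1) (pow_nonneg hx.1 _)
  have hpart1 : ∀ r : ℝ, 0 ≤ r →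
      u₀ + (∫ t in (0:ℝ)..r, t ^ (1 - (N:ℤ)) *
        ∫ s in (0:ℝ)..t, s ^ (N - 1) * m s) ≤ u r := by
    intro r hr
    have := hmain r hr
    rw [hint r hr]
    linarith
  refine ⟨hpart1, ?_⟩
  intro hP
  apply tendsto_atTop_mono' _ _ (tendsto_atTop_add_const_left _ u₀ hP)
  filter_upwards [eventually_ge_atTop (0:ℝ)] with r hr using hpart1 r hr
end

section
/- Under hypotheses (h1), (g1), with N ≥ 3, a, b nonnegative continuous NONDECREASING functions on [0,∞), and u₀ ≥ s₀, let u ∈ C²([0,∞)) be a nondecreasing solution with u ≥ u₀ of (r^{N-1} u'(r))' = r^{N-1}(a(r) h(u(r)) + b(r) g(u(r))) for r > 0, u(0) = u₀, u'(0) = 0. Then u is convex: u''(r) ≥ 0 for all r ≥ 0; more precisely u''(r) ≥ (1/N)(a(r) h(u(r)) + b(r) g(u(r))) for all r > 0. -/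
open MeasureTheory Filter Set

theorem stmt9 (N : ℕ) (hN : 3 ≤ N)
    (a b : ℝ → ℝ)
    (ha_cont : ContinuousOn a (Set.Ici 0)) (ha_nonneg : ∀ s ∈ Set.Ici (0:ℝ), 0 ≤ a s)
    (hb_cont : ContinuousOn b (Set.Ici 0)) (hb_nonneg : ∀ s ∈ Set.Ici (0:ℝ), 0 ≤ b s)
    (h g : ℝ → ℝ) (s₀ : ℝ) (hs₀ : 0 < s₀)
    (hh_cont : ContinuousOn h (Set.Ici 0)) (hh_mono : MonotoneOn h (Set.Ici 0))
    (hh_nonneg : ∀ s ∈ Set.Ici (0:ℝ), 0 ≤ h s)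
    (hh0 : h 0 = 0) (hh_pos : ∀ s : ℝ, 0 < s → 0 < h s)
    (hg_cont : ContinuousOn g (Set.Ioi 0))
    (hg_mono : MonotoneOn g (Set.Ioi s₀))
    (hg_lim : Filter.Tendsto g (nhdsWithin 0 (Set.Ioi 0)) (nhds 0))
    (hg_s0 : g s₀ = 0)
    (hg_neg : ∀ s ∈ Set.Ioo 0 s₀, g s < 0)
    (hg_pos : ∀ s ∈ Set.Ioi s₀, 0 < g s)
    (u₀ : ℝ) (hu₀ : s₀ ≤ u₀)
    (ha_mono : MonotoneOn a (Set.Ici 0)) (hb_mono : MonotoneOn b (Set.Ici 0))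
    (u u' u'' : ℝ → ℝ)
    (hu' : ∀ r ∈ Set.Ici (0:ℝ), HasDerivWithinAt u (u' r) (Set.Ici 0) r)
    (hu'' : ∀ r ∈ Set.Ici (0:ℝ), HasDerivWithinAt u' (u'' r) (Set.Ici 0) r)
    (hu''_cont : ContinuousOn u'' (Set.Ici 0))
    (hu_mono : MonotoneOn u (Set.Ici 0))
    (hu_ge : ∀ r ∈ Set.Ici (0:ℝ), u₀ ≤ u r)
    (hode : ∀ r : ℝ, 0 < r →
      HasDerivAt (fun x : ℝ => x ^ (N - 1) * u' x)
        (r ^ (N - 1) * (a r * h (u r) + b r * g (u r))) r)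
    (hu0 : u 0 = u₀) (hu'0 : u' 0 = 0)
    :
    (∀ r : ℝ, 0 ≤ r → 0 ≤ u'' r) ∧
    (∀ r : ℝ, 0 < r →
      (1 / (N:ℝ)) * (a r * h (u r) + b r * g (u r)) ≤ u'' r) := by
  set f : ℝ → ℝ := fun r => a r * h (u r) + b r * g (u r) with hf_def
  have hu_ges : ∀ r ∈ Set.Ici (0:ℝ), s₀ ≤ u r := fun r hr => le_trans hu₀ (hu_ge r hr)
  have hu_pos : ∀ r ∈ Set.Ici (0:ℝ), 0 < u r := fun r hr => lt_of_lt_of_le hs₀ (hu_ges r hr)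
  have hu_cont : ContinuousOn u (Set.Ici 0) := fun r hr => (hu' r hr).continuousWithinAt
  have hu'_cont : ContinuousOn u' (Set.Ici 0) := fun r hr => (hu'' r hr).continuousWithinAt
  have hg_nonneg' : ∀ s, s₀ ≤ s → 0 ≤ g s := by
    intro s hs
    rcases eq_or_lt_of_le hs with rfl | hlt
    · simp [hg_s0]
    · exact (hg_pos s hlt).le
  have hg_mono' : MonotoneOn g (Set.Ici s₀) := by
    intro x hx y hy hxy
    rcases eq_or_lt_of_le (Set.mem_Ici.mp hx) with rfl | hx'
    · rw [hg_s0]; exact hg_nonneg' y hy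
    · exact hg_mono hx' (lt_of_lt_of_le hx' hxy) hxy
  have hf_nonneg : ∀ r ∈ Set.Ici (0:ℝ), 0 ≤ f r := by
    intro r hr
    have h1 : 0 ≤ h (u r) := hh_nonneg _ (le_of_lt (hu_pos r hr))
    have h2 : 0 ≤ g (u r) := hg_nonneg' _ (hu_ges r hr)
    exact add_nonneg (mul_nonneg (ha_nonneg r hr) h1) (mul_nonneg (hb_nonneg r hr) h2)
  have hf_mono : MonotoneOn f (Set.Ici 0) := by
    intro x hx y hy hxy
    have hux : u x ≤ u y := hu_mono hx hy hxy
    have h1 : h (u x) ≤ h (u y) := hh_mono (hu_pos x hx).le (hu_pos y hy).le hux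
    have h2 : g (u x) ≤ g (u y) := hg_mono' (hu_ges x hx) (hu_ges y hy) hux
    exact add_le_add
      (mul_le_mul (ha_mono hx hy hxy) h1 (hh_nonneg _ (hu_pos x hx).le) (ha_nonneg y hy))
      (mul_le_mul (hb_mono hx hy hxy) h2 (hg_nonneg' _ (hu_ges x hx)) (hb_nonneg y hy))
  have hf_cont : ContinuousOn f (Set.Ici 0) := by
    apply ContinuousOn.add
    · exact ha_cont.mul (hh_cont.comp hu_cont (fun r hr => (hu_pos r hr).le))
    · exact hb_cont.mul (hg_cont.comp hu_cont (fun r hr => hu_pos r hr))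
  have hint : ∀ r : ℝ, 0 < r →
      IntervalIntegrable (fun t => t ^ (N-1) * f t) volume 0 r := by
    intro r hr
    apply ContinuousOn.intervalIntegrable
    rw [Set.uIcc_of_le hr.le]
    exact ((continuousOn_pow _).mul (hf_cont.mono Set.Icc_subset_Ici_self))
  have key : ∀ r : ℝ, 0 < r → r ^ (N-1) * u' r = ∫ t in (0:ℝ)..r, t ^ (N-1) * f t := by
    intro r hr
    have hcont : ContinuousOn (fun x => x ^ (N-1) * u' x) (Set.Icc 0 r) :=
      (continuousOn_pow _).mul (hu'_cont.mono Set.Icc_subset_Ici_self)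
    have hderiv : ∀ x ∈ Set.Ioo (0:ℝ) r, HasDerivWithinAt (fun x => x ^ (N-1) * u' x)
        (x ^ (N-1) * f x) (Set.Ioi x) x := fun x hx => (hode x hx.1).hasDerivWithinAt
    have heq := intervalIntegral.integral_eq_sub_of_hasDeriv_right_of_le hr.le hcont hderiv (hint r hr)
    rw [heq, hu'0, zero_pow (by omega : N - 1 ≠ 0)]
    ring
  have hu'_le : ∀ r : ℝ, 0 < r → u' r ≤ r * f r / N := by
    intro r hr
    have hint2 : IntervalIntegrable (fun t => t ^ (N-1) * f r) volume 0 r :=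
      (Continuous.intervalIntegrable (by continuity) 0 r)
    have hle : ∫ t in (0:ℝ)..r, t ^ (N-1) * f t ≤ ∫ t in (0:ℝ)..r, t ^ (N-1) * f r := by
      apply intervalIntegral.integral_mono_on hr.le (hint r hr) hint2
      intro t ht
      exact mul_le_mul_of_nonneg_left (hf_mono ht.1 hr.le ht.2) (pow_nonneg ht.1 _)
    have heval : ∫ t in (0:ℝ)..r, t ^ (N-1) * f r = r ^ (N-1) * (r * f r / N) := by
      rw [intervalIntegral.integral_mul_const, integral_pow]
      rw [zero_pow (by omega : N - 1 + 1 ≠ 0), Nat.cast_sub (by omega : 1 ≤ N)]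
      have hN' : (3:ℝ) ≤ (N:ℝ) := by exact_mod_cast hN
      rw [show N - 1 + 1 = N from by omega, show N = (N-1)+1 from by omega, pow_succ]
      rw [show N - 1 + 1 - 1 = N - 1 from by omega, Nat.cast_one, sub_add_cancel]
      field_simp
      ring
    have := le_trans (le_of_eq (key r hr)) (le_of_le_of_eq hle heval)
    exact le_of_mul_le_mul_left (by linarith [this]) (pow_pos hr (N-1))
  have main : ∀ r : ℝ, 0 < r → (1 / (N:ℝ)) * f r ≤ u'' r := by
    intro r hr
    have hmem : Set.Ici (0:ℝ) ∈ nhds r := Ici_mem_nhds hr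
    have hu''r : HasDerivAt u' (u'' r) r := (hu'' r hr.le).hasDerivAt hmem
    have hpow : HasDerivAt (fun x : ℝ => x ^ (N-1)) ((N-1:ℕ) * r ^ (N-1-1)) r :=
      hasDerivAt_pow _ _
    have hid := (hode r hr).unique (hpow.mul hu''r)
    rw [show N - 1 - 1 = N - 2 from by omega] at hid
    have hcast : ((N-1:ℕ):ℝ) = (N:ℝ) - 1 := by
      rw [Nat.cast_sub (by omega : 1 ≤ N)]; norm_num
    rw [hcast] at hid
    have hle := hu'_le r hr
    have hNpos : (0:ℝ) < N := by exact_mod_cast (by omega : 0 < N)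
    have hN3 : (3:ℝ) ≤ (N:ℝ) := by exact_mod_cast hN
    have hA : (0:ℝ) < r ^ (N-2) := pow_pos hr _
    have hpow1 : r ^ (N-1) = r ^ (N-2) * r := by
      rw [show N - 1 = (N-2)+1 from by omega, pow_succ]
    rw [hpow1, show a r * h (u r) + b r * g (u r) = f r from rfl] at hid
    have h1 : ((N:ℝ)-1) * r ^ (N-2) * u' r ≤ ((N:ℝ)-1) * r ^ (N-2) * (r * f r / N) :=
      mul_le_mul_of_nonneg_left hle (mul_nonneg (by linarith) hA.le)
    have h2 : r ^ (N-2) * r * ((1 / (N:ℝ)) * f r) ≤ r ^ (N-2) * r * u'' r := by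
      have : r ^ (N-2) * r * u'' r = r ^ (N-2) * r * f r - ((N:ℝ)-1) * r ^ (N-2) * u' r := by
        linarith [hid]
      rw [this]
      have : ((N:ℝ)-1) * r ^ (N-2) * (r * f r / N) =
          r ^ (N-2) * r * f r - r ^ (N-2) * r * ((1 / (N:ℝ)) * f r) := by
        field_simp
      linarith [h1, this]
    exact le_of_mul_le_mul_left h2 (by positivity)
  refine ⟨?_, main⟩
  intro r hr
  rcases eq_or_lt_of_le hr with rfl | hr'
  · have hc : ContinuousWithinAt u'' (Set.Ici 0) 0 := hu''_cont 0 Set.self_mem_Ici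
    have ht : Filter.Tendsto u'' (nhdsWithin 0 (Set.Ioi 0)) (nhds (u'' 0)) :=
      hc.tendsto.mono_left (nhdsWithin_mono _ Set.Ioi_subset_Ici_self)
    refine ge_of_tendsto ht ?_
    filter_upwards [self_mem_nhdsWithin] with x hx
    exact le_trans (mul_nonneg (by positivity) (hf_nonneg x (Set.mem_Ici.mpr (le_of_lt (Set.mem_Ioi.mp hx))))) (main x hx)
  · exact le_trans (mul_nonneg (by positivity) (hf_nonneg r hr)) (main r hr')
end

section
/- Under hypotheses (h1), (g1), (O), with N ≥ 3, a, b nonnegative continuous functions on [0,∞), and u₀ ≥ s₀, no solution of the integral equation can blow up in finite radius: if R ∈ (0,∞] and u : [0,R) → ℝ is continuous with u ≥ u₀ and satisfies u(r) = u₀ + ∫₀^r t^{1-N} ∫₀^t s^{N-1} (a(s) h(u(s)) + b(s) g(u(s))) ds dt for all r ∈ [0,R), then H(u(r)) ≤ P̄(r) for all r ∈ [0,R); in particular, if R < ∞ then u does not tend to ∞ as r → R⁻. Here H(t) := ∫_{u₀}^t ds/(h(s)+g(s)) and P̄(r) := ∫₀^r t^{1-N} ∫₀^t s^{N-1} (a(s)+b(s))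 ds dt. -/
open MeasureTheory Filter Set intervalIntegral

noncomputable def Kfun (N : ℕ) (f : ℝ → ℝ) (t : ℝ) : ℝ :=
  t ^ (1 - (N:ℤ)) * ∫ s in (0:ℝ)..t, s ^ (N-1) * f s

lemma kfun_inner_int {N : ℕ} {f : ℝ → ℝ} {r : ℝ} (hr : 0 ≤ r)
    (hf : ContinuousOn f (Icc 0 r)) :
    IntegrableOn (fun s => s ^ (N-1) * f s) (Icc 0 r) :=
  (ContinuousOn.mul (continuousOn_pow _) hf).integrableOn_compact isCompact_Icc

lemma kfun_inner_cont {N : ℕ} {f : ℝ → ℝ} {r : ℝ} (hr : 0 ≤ r)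
    (hf : ContinuousOn f (Icc 0 r)) :
    ContinuousOn (fun t => ∫ s in (0:ℝ)..t, s ^ (N-1) * f s) (Icc 0 r) := by
  have := intervalIntegral.continuousOn_primitive_interval
    (f := fun s => s ^ (N-1) * f s) (a := (0:ℝ)) (b := r) (μ := volume) ?_
  · rwa [uIcc_of_le hr] at this
  · rw [uIcc_of_le hr]; exact kfun_inner_int hr hf

lemma kfun_inner_nonneg {N : ℕ} {f : ℝ → ℝ} {r : ℝ}
    (hf : ContinuousOn f (Icc 0 r)) (hf0 : ∀ s ∈ Icc (0:ℝ) r, 0 ≤ f s)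
    {t : ℝ} (ht : t ∈ Icc (0:ℝ) r) :
    0 ≤ ∫ s in (0:ℝ)..t, s ^ (N-1) * f s := by
  apply intervalIntegral.integral_nonneg ht.1
  intro s hs
  exact mul_nonneg (pow_nonneg hs.1 _) (hf0 s ⟨hs.1, hs.2.trans ht.2⟩)

lemma kfun_nonneg {N : ℕ} {f : ℝ → ℝ} {r : ℝ}
    (hf : ContinuousOn f (Icc 0 r)) (hf0 : ∀ s ∈ Icc (0:ℝ) r, 0 ≤ f s)
    {t : ℝ} (ht : t ∈ Icc (0:ℝ) r) :
    0 ≤ Kfun N f t :=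
  mul_nonneg (zpow_nonneg ht.1 _) (kfun_inner_nonneg hf hf0 ht)

lemma kfun_bound {N : ℕ} {f : ℝ → ℝ} {r C : ℝ} (hr : 0 ≤ r) (hN : 1 ≤ N)
    (hf : ContinuousOn f (Icc 0 r)) (hf0 : ∀ s ∈ Icc (0:ℝ) r, 0 ≤ f s)
    (hC : ∀ s ∈ Icc (0:ℝ) r, f s ≤ C)
    {t : ℝ} (ht : t ∈ Icc (0:ℝ) r) :
    Kfun N f t ≤ C * t := by
  rcases eq_or_lt_of_le ht.1 with h0 | h0
  · have : Kfun N f t = 0 := by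
      simp [Kfun, ← h0]
    rw [this, ← h0, mul_zero]
  · have hCpos : 0 ≤ C := le_trans (hf0 0 ⟨le_refl _, hr⟩) (hC 0 ⟨le_refl _, hr⟩)
    have hinner : (∫ s in (0:ℝ)..t, s ^ (N-1) * f s) ≤ C * t ^ N := by
      have hle : ∀ s ∈ Icc (0:ℝ) t, s ^ (N-1) * f s ≤ t ^ (N-1) * C := by
        intro s hs
        have hs' : s ∈ Icc (0:ℝ) r := ⟨hs.1, hs.2.trans ht.2⟩
        exact mul_le_mul (pow_le_pow_left₀ hs.1 hs.2 _) (hC s hs')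
          (hf0 s hs') (pow_nonneg ht.1 _)
      calc (∫ s in (0:ℝ)..t, s ^ (N-1) * f s) ≤ ∫ _s in (0:ℝ)..t, t ^ (N-1) * C := by
            apply intervalIntegral.integral_mono_on ht.1 ?_ ?_ hle
            · exact ((kfun_inner_int ht.1 (hf.mono (Icc_subset_Icc_right ht.2))).mono_set
                (by rw [uIcc_of_le ht.1])).intervalIntegrable
            · exact intervalIntegrable_const
        _ = C * t ^ N := by
            rw [intervalIntegral.integral_const, smul_eq_mul, sub_zero]
            rw [mul_comm (t ^ (N-1)) C, ← mul_assoc, mul_comm t _, mul_assoc,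
              ← pow_succ']
            congr 2
            omega
    calc Kfun N f t ≤ t ^ (1 - (N:ℤ)) * (C * t ^ N) :=
          mul_le_mul_of_nonneg_left hinner (zpow_nonneg ht.1 _)
      _ = C * (t ^ (1 - (N:ℤ)) * t ^ (N:ℤ)) := by rw [zpow_natCast]; ring
      _ = C * t := by rw [← zpow_add₀ (ne_of_gt h0)]; norm_num

lemma kfun_cont {N : ℕ} {f : ℝ → ℝ} {r : ℝ} (hr : 0 ≤ r) (hN : 1 ≤ N)
    (hf : ContinuousOn f (Icc 0 r)) (hf0 : ∀ s ∈ Icc (0:ℝ) r, 0 ≤ f s) :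
    ContinuousOn (Kfun N f) (Icc 0 r) := by
  intro t ht
  rcases eq_or_lt_of_le ht.1 with h0 | h0
  · -- t = 0 : squeeze
    obtain ⟨C, hC⟩ := isCompact_Icc.exists_bound_of_continuousOn hf
    have hK0 : Kfun N f 0 = 0 := by simp [Kfun]
    rw [← h0]
    show Tendsto (Kfun N f) (nhdsWithin 0 (Icc 0 r)) (nhds (Kfun N f 0))
    rw [hK0]
    refine squeeze_zero' (g := fun x => C * x) ?_ ?_ ?_
    · filter_upwards [self_mem_nhdsWithin] with x hx
      exact kfun_nonneg hf hf0 hx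
    · filter_upwards [self_mem_nhdsWithin] with x hx
      exact kfun_bound hr hN hf hf0 (fun s hs => (le_abs_self _).trans (hC s hs)) hx
    · have : Tendsto (fun x : ℝ => C * x) (nhdsWithin 0 (Icc 0 r)) (nhds (C * 0)) :=
        ((continuous_const.mul continuous_id).tendsto 0).mono_left nhdsWithin_le_nhds
      simpa using this
  · exact (((continuousAt_zpow₀ t _ (Or.inl (ne_of_gt h0))).continuousWithinAt).mul
      (kfun_inner_cont hr hf t ht))

lemma kfun_inner_ii {N : ℕ} {f : ℝ → ℝ} {x : ℝ} (hx : 0 ≤ x)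
    (hf : ContinuousOn f (Icc 0 x)) :
    IntervalIntegrable (fun s => s ^ (N-1) * f s) volume 0 x := by
  have h := kfun_inner_int (N := N) hx hf
  rw [show (Icc (0:ℝ) x) = uIcc 0 x from (uIcc_of_le hx).symm] at h
  exact h.intervalIntegrable

lemma kfun_ii {N : ℕ} {f : ℝ → ℝ} {r x : ℝ} (hr : 0 ≤ r) (hN : 1 ≤ N)
    (hf : ContinuousOn f (Icc 0 r)) (hf0 : ∀ s ∈ Icc (0:ℝ) r, 0 ≤ f s)
    (hx : x ∈ Icc (0:ℝ) r) :
    IntervalIntegrable (Kfun N f) volume 0 x := by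
  have h : IntegrableOn (Kfun N f) (Icc 0 x) :=
    ((kfun_cont hr hN hf hf0).mono (Icc_subset_Icc_right hx.2)).integrableOn_compact
      isCompact_Icc
  rw [show (Icc (0:ℝ) x) = uIcc 0 x from (uIcc_of_le hx.1).symm] at h
  exact h.intervalIntegrable

lemma kfun_le {N : ℕ} {F Fb : ℝ → ℝ} {x M : ℝ} (hx : 0 ≤ x)
    (hF : ContinuousOn F (Icc 0 x)) (hFb : ContinuousOn Fb (Icc 0 x))
    (hle : ∀ s ∈ Icc (0:ℝ) x, F s ≤ M * Fb s) :
    Kfun N F x ≤ M * Kfun N Fb x := by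
  have h1 : (∫ s in (0:ℝ)..x, s ^ (N-1) * F s) ≤ ∫ s in (0:ℝ)..x, M * (s ^ (N-1) * Fb s) := by
    apply intervalIntegral.integral_mono_on hx (kfun_inner_ii hx hF)
      ((kfun_inner_ii hx hFb).const_mul M)
    intro s hs
    rw [← mul_assoc, mul_comm M, mul_assoc]
    exact mul_le_mul_of_nonneg_left (hle s hs) (pow_nonneg hs.1 _)
  rw [intervalIntegral.integral_const_mul] at h1
  unfold Kfun
  calc x ^ (1-(N:ℤ)) * ∫ s in (0:ℝ)..x, s ^ (N-1) * F s
      ≤ x ^ (1-(N:ℤ)) * (M * ∫ s in (0:ℝ)..x, s ^ (N-1) * Fb s) :=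
        mul_le_mul_of_nonneg_left h1 (zpow_nonneg hx _)
    _ = M * (x ^ (1-(N:ℤ)) * ∫ s in (0:ℝ)..x, s ^ (N-1) * Fb s) := by ring

theorem stmt17 (N : ℕ) (hN : 3 ≤ N)
    (a b : ℝ → ℝ)
    (ha_cont : ContinuousOn a (Set.Ici 0)) (ha_nonneg : ∀ s ∈ Set.Ici (0:ℝ), 0 ≤ a s)
    (hb_cont : ContinuousOn b (Set.Ici 0)) (hb_nonneg : ∀ s ∈ Set.Ici (0:ℝ), 0 ≤ b s)
    (h g : ℝ → ℝ) (s₀ : ℝ) (hs₀ : 0 < s₀)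
    (hh_cont : ContinuousOn h (Set.Ici 0)) (hh_mono : MonotoneOn h (Set.Ici 0))
    (hh_nonneg : ∀ s ∈ Set.Ici (0:ℝ), 0 ≤ h s)
    (hh0 : h 0 = 0) (hh_pos : ∀ s : ℝ, 0 < s → 0 < h s)
    (hg_cont : ContinuousOn g (Set.Ioi 0))
    (hg_mono : MonotoneOn g (Set.Ioi s₀))
    (hg_lim : Filter.Tendsto g (nhdsWithin 0 (Set.Ioi 0)) (nhds 0))
    (hg_s0 : g s₀ = 0)
    (hg_neg : ∀ s ∈ Set.Ioo 0 s₀, g s < 0)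
    (hg_pos : ∀ s ∈ Set.Ioi s₀, 0 < g s)
    (u₀ : ℝ) (hu₀ : s₀ ≤ u₀)
    (hO : Filter.Tendsto (fun t : ℝ => ∫ s in u₀..t, 1 / (h s + g s)) Filter.atTop Filter.atTop)
    (R : ENNReal) (hR : 0 < R) (u : ℝ → ℝ)
    (hu_cont : ContinuousOn u {r : ℝ | 0 ≤ r ∧ ENNReal.ofReal r < R})
    (hu_ge : ∀ r : ℝ, 0 ≤ r → ENNReal.ofReal r < R → u₀ ≤ u r)
    (hint : ∀ r : ℝ, 0 ≤ r → ENNReal.ofReal r < R → u r =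
      u₀ + ∫ t in (0:ℝ)..r, t ^ (1 - (N:ℤ)) *
        ∫ s in (0:ℝ)..t, s ^ (N - 1) * (a s * h (u s) + b s * g (u s))) :
    (∀ r : ℝ, 0 ≤ r → ENNReal.ofReal r < R →
      (∫ s in u₀..(u r), 1 / (h s + g s)) ≤
        ∫ t in (0:ℝ)..r, t ^ (1 - (N:ℤ)) *
          ∫ s in (0:ℝ)..t, s ^ (N - 1) * (a s + b s)) ∧
    (R ≠ ⊤ → ¬ Filter.Tendsto u (nhdsWithin R.toReal (Set.Iio R.toReal))
      Filter.atTop) := by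
  have hN1 : 1 ≤ N := by omega
  have hu₀pos : 0 < u₀ := hs₀.trans_le hu₀
  set F : ℝ → ℝ := fun s => a s * h (u s) + b s * g (u s) with hF
  set Fb : ℝ → ℝ := fun s => a s + b s with hFb
  have hg_nonneg' : ∀ y : ℝ, s₀ ≤ y → 0 ≤ g y := by
    intro y hy
    rcases eq_or_lt_of_le hy with h' | h'
    · rw [← h', hg_s0]
    · exact (hg_pos y h').le
  have hg_mono' : ∀ y z : ℝ, s₀ ≤ y → y ≤ z → g y ≤ g z := by
    intro y z hy hyz
    rcases eq_or_lt_of_le hy with h' | h'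
    · rw [← h', hg_s0]; exact hg_nonneg' z (hy.trans hyz)
    · exact hg_mono h' (h'.trans_le hyz) hyz
  have hden_pos : ∀ y : ℝ, u₀ ≤ y → 0 < h y + g y := by
    intro y hy
    exact add_pos_of_pos_of_nonneg (hh_pos y (hu₀pos.trans_le hy))
      (hg_nonneg' y (hu₀.trans hy))
  have hq_cont : ContinuousOn (fun s => 1 / (h s + g s)) (Ici u₀) := by
    apply ContinuousOn.div continuousOn_const
    · exact (hh_cont.mono (Ici_subset_Ici.mpr hu₀pos.le)).add
        (hg_cont.mono (fun y hy => hu₀pos.trans_le hy))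
    · exact fun y hy => ne_of_gt (hden_pos y hy)
  -- main inequality
  have key : ∀ r : ℝ, 0 ≤ r → ENNReal.ofReal r < R →
      (∫ s in u₀..(u r), 1 / (h s + g s)) ≤ ∫ t in (0:ℝ)..r, Kfun N Fb t := by
    intro r hr0 hrR
    have hIcc : ∀ x ∈ Icc (0:ℝ) r, 0 ≤ x ∧ ENNReal.ofReal x < R := by
      intro x hx
      exact ⟨hx.1, lt_of_le_of_lt (ENNReal.ofReal_le_ofReal hx.2) hrR⟩
    have huc : ContinuousOn u (Icc 0 r) := hu_cont.mono (fun x hx => hIcc x hx)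
    have huge : ∀ x ∈ Icc (0:ℝ) r, u₀ ≤ u x :=
      fun x hx => hu_ge x (hIcc x hx).1 (hIcc x hx).2
    have hupos : ∀ x ∈ Icc (0:ℝ) r, 0 < u x :=
      fun x hx => hu₀pos.trans_le (huge x hx)
    have hu_eq : ∀ x ∈ Icc (0:ℝ) r, u x = u₀ + ∫ t in (0:ℝ)..x, Kfun N F t :=
      fun x hx => hint x (hIcc x hx).1 (hIcc x hx).2
    have hFcont : ContinuousOn F (Icc 0 r) := by
      apply ContinuousOn.add
      · exact (ha_cont.mono (fun x hx => hx.1)).mul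
          (hh_cont.comp huc (fun x hx => (hupos x hx).le))
      · exact (hb_cont.mono (fun x hx => hx.1)).mul
          (hg_cont.comp huc (fun x hx => hupos x hx))
    have hFnonneg : ∀ s ∈ Icc (0:ℝ) r, 0 ≤ F s := by
      intro s hs
      apply add_nonneg
      · exact mul_nonneg (ha_nonneg s hs.1) (hh_nonneg _ (hupos s hs).le)
      · exact mul_nonneg (hb_nonneg s hs.1) (hg_nonneg' _ (hu₀.trans (huge s hs)))
    have hFbcont : ContinuousOn Fb (Icc 0 r) :=
      (ha_cont.mono (fun x hx => hx.1)).add (hb_cont.mono (fun x hx => hx.1))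
    have hFbnonneg : ∀ s ∈ Icc (0:ℝ) r, 0 ≤ Fb s :=
      fun s hs => add_nonneg (ha_nonneg s hs.1) (hb_nonneg s hs.1)
    have hGcont : ContinuousOn (Kfun N F) (Icc 0 r) := kfun_cont hr0 hN1 hFcont hFnonneg
    have hGbcont : ContinuousOn (Kfun N Fb) (Icc 0 r) := kfun_cont hr0 hN1 hFbcont hFbnonneg
    have hu0eq : u 0 = u₀ := by
      rw [hu_eq 0 (left_mem_Icc.mpr hr0), intervalIntegral.integral_same, add_zero]
    rcases eq_or_lt_of_le hr0 with hr | hr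
    · rw [← hr, hu0eq, intervalIntegral.integral_same, intervalIntegral.integral_same]
    -- r > 0
    have hu_mono : ∀ s x, s ∈ Icc (0:ℝ) r → x ∈ Icc (0:ℝ) r → s ≤ x → u s ≤ u x := by
      intro s x hs hx hsx
      rw [hu_eq s hs, hu_eq x hx]
      apply (add_le_add_iff_left _).mpr
      have hsub := intervalIntegral.integral_interval_sub_left
        (kfun_ii hr0 hN1 hFcont hFnonneg hx) (kfun_ii hr0 hN1 hFcont hFnonneg hs)
      have hpos : 0 ≤ ∫ t in s..x, Kfun N F t := by
        apply intervalIntegral.integral_nonneg hsx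
        intro t ht
        exact kfun_nonneg hFcont hFnonneg ⟨hs.1.trans ht.1, ht.2.trans hx.2⟩
      linarith [hsub, hpos]
    -- max of u
    obtain ⟨z, hzI, hzmax⟩ := isCompact_Icc.exists_isMaxOn (α := ℝ)
      (Set.nonempty_Icc.mpr hr0) huc
    have hu₀Y : u₀ ≤ u z := huge z hzI
    have hmaps : Set.MapsTo u (Icc 0 r) (Icc u₀ (u z)) :=
      fun x hx => ⟨huge x hx, hzmax hx⟩
    have hHHcont : ContinuousOn (fun y => ∫ s in u₀..y, 1 / (h s + g s)) (Icc u₀ (u z)) := by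
      have hq_int : IntegrableOn (fun s => 1 / (h s + g s)) (uIcc u₀ (u z)) := by
        rw [uIcc_of_le hu₀Y]
        exact (hq_cont.mono Icc_subset_Ici_self).integrableOn_compact isCompact_Icc
      have := intervalIntegral.continuousOn_primitive_interval hq_int
      rwa [uIcc_of_le hu₀Y] at this
    set Φ : ℝ → ℝ := fun x => (∫ s in u₀..(u x), 1 / (h s + g s)) - ∫ t in (0:ℝ)..x, Kfun N Fb t
      with hΦ
    have hΦcont : ContinuousOn Φ (Icc 0 r) := by
      apply ContinuousOn.sub (hHHcont.comp huc hmaps)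
      have hGb_int : IntegrableOn (Kfun N Fb) (uIcc 0 r) := by
        rw [uIcc_of_le hr0]
        exact hGbcont.integrableOn_compact isCompact_Icc
      have := intervalIntegral.continuousOn_primitive_interval hGb_int
      rwa [uIcc_of_le hr0] at this
    have hderiv : ∀ x ∈ Ioo (0:ℝ) r,
        HasDerivAt Φ ((1 / (h (u x) + g (u x))) * Kfun N F x - Kfun N Fb x) x := by
      intro x hx
      have hxI : x ∈ Icc (0:ℝ) r := Ioo_subset_Icc_self hx
      have hnhds : Icc (0:ℝ) r ∈ nhds x := Icc_mem_nhds hx.1 hx.2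
      have hux0 : 0 < u x := hupos x hxI
      have huxu₀ : u₀ ≤ u x := huge x hxI
      -- derivative of u
      have hmeasG : StronglyMeasurableAtFilter (Kfun N F) (nhds x) volume :=
        ⟨Icc 0 r, hnhds, hGcont.aestronglyMeasurable measurableSet_Icc⟩
      have hv : HasDerivAt (fun y => u₀ + ∫ t in (0:ℝ)..y, Kfun N F t) (Kfun N F x) x :=
        (intervalIntegral.integral_hasDerivAt_right
          (kfun_ii hr0 hN1 hFcont hFnonneg hxI) hmeasG (hGcont.continuousAt hnhds)).const_add u₀
      have hu' : HasDerivAt u (Kfun N F x) x := by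
        apply hv.congr_of_eventuallyEq
        filter_upwards [hnhds] with y hy
        exact hu_eq y hy
      -- derivative of the primitive of 1/(h+g)
      have hqint : IntervalIntegrable (fun s => 1 / (h s + g s)) volume u₀ (u x) := by
        have : IntegrableOn (fun s => 1 / (h s + g s)) (uIcc u₀ (u x)) := by
          rw [uIcc_of_le huxu₀]
          exact (hq_cont.mono Icc_subset_Ici_self).integrableOn_compact isCompact_Icc
        exact this.intervalIntegrable
      have hqmeas : StronglyMeasurableAtFilter (fun s => 1 / (h s + g s)) (nhds (u x)) volume := by
        refine ⟨Ioi 0, Ioi_mem_nhds hux0, ?_⟩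
        have hhm : AEMeasurable h (volume.restrict (Ioi (0:ℝ))) :=
          (hh_cont.mono Ioi_subset_Ici_self).aemeasurable measurableSet_Ioi
        have hgm : AEMeasurable g (volume.restrict (Ioi (0:ℝ))) :=
          hg_cont.aemeasurable measurableSet_Ioi
        exact (aemeasurable_const.div (hhm.add hgm)).aestronglyMeasurable
      have hqcontAt : ContinuousAt (fun s => 1 / (h s + g s)) (u x) := by
        have h1 : ContinuousAt h (u x) :=
          hh_cont.continuousAt (mem_of_superset (Ioi_mem_nhds hux0) Ioi_subset_Ici_self)
        have h2 : ContinuousAt g (u x) := hg_cont.continuousAt (Ioi_mem_nhds hux0)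
        exact continuousAt_const.div (h1.add h2) (ne_of_gt (hden_pos _ huxu₀))
      have hHH' : HasDerivAt (fun y => ∫ s in u₀..y, 1 / (h s + g s))
          (1 / (h (u x) + g (u x))) (u x) :=
        intervalIntegral.integral_hasDerivAt_right hqint hqmeas hqcontAt
      have hcomp := hHH'.comp x hu'
      -- derivative of the primitive of Kfun N Fb
      have hmeasGb : StronglyMeasurableAtFilter (Kfun N Fb) (nhds x) volume :=
        ⟨Icc 0 r, hnhds, hGbcont.aestronglyMeasurable measurableSet_Icc⟩
      have hP : HasDerivAt (fun y => ∫ t in (0:ℝ)..y, Kfun N Fb t) (Kfun N Fb x) x :=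
        intervalIntegral.integral_hasDerivAt_right
          (kfun_ii hr0 hN1 hFbcont hFbnonneg hxI) hmeasGb (hGbcont.continuousAt hnhds)
      exact hcomp.sub hP
    have hΦdiff : DifferentiableOn ℝ Φ (interior (Icc 0 r)) := by
      rw [interior_Icc]
      exact fun x hx => ((hderiv x hx).differentiableAt).differentiableWithinAt
    have hΦd0 : ∀ x ∈ interior (Icc (0:ℝ) r), deriv Φ x ≤ 0 := by
      rw [interior_Icc]
      intro x hx
      rw [(hderiv x hx).deriv]
      have hxI : x ∈ Icc (0:ℝ) r := Ioo_subset_Icc_self hx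
      have hM : 0 < h (u x) + g (u x) := hden_pos _ (huge x hxI)
      have hcmp : Kfun N F x ≤ (h (u x) + g (u x)) * Kfun N Fb x := by
        apply kfun_le hx.1.le (hFcont.mono (Icc_subset_Icc_right hxI.2))
          (hFbcont.mono (Icc_subset_Icc_right hxI.2))
        intro s hs
        have hsI : s ∈ Icc (0:ℝ) r := ⟨hs.1, hs.2.trans hxI.2⟩
        have husx : u s ≤ u x := hu_mono s x hsI hxI hs.2
        have h1 : h (u s) ≤ h (u x) + g (u x) := by
          have := hh_mono (Set.mem_Ici.mpr (hupos s hsI).le)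
            (Set.mem_Ici.mpr (hupos x hxI).le) husx
          have := hg_nonneg' (u x) (hu₀.trans (huge x hxI))
          linarith
        have h2 : g (u s) ≤ h (u x) + g (u x) := by
          have := hg_mono' (u s) (u x) (hu₀.trans (huge s hsI)) husx
          have := (hh_pos (u x) (hupos x hxI)).le
          linarith
        have e : (h (u x) + g (u x)) * Fb s = a s * (h (u x) + g (u x))
            + b s * (h (u x) + g (u x)) := by simp only [hFb]; ring
        simp only [hF]
        rw [e]
        exact add_le_add (mul_le_mul_of_nonneg_left h1 (ha_nonneg s hsI.1))
          (mul_le_mul_of_nonneg_left h2 (hb_nonneg s hsI.1))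
      rw [sub_nonpos, one_div]
      rw [inv_mul_le_iff₀ hM]
      exact hcmp
    have hanti := antitoneOn_of_deriv_nonpos (convex_Icc 0 r) hΦcont hΦdiff hΦd0
    have hfin := hanti (left_mem_Icc.mpr hr0) (right_mem_Icc.mpr hr0) hr0
    have hΦ0 : Φ 0 = 0 := by
      simp only [hΦ, hu0eq, intervalIntegral.integral_same, sub_zero]
    rw [hΦ0] at hfin
    simp only [hΦ, sub_nonpos] at hfin
    exact hfin
  constructor
  · intro r hr0 hrR
    exact key r hr0 hrR
  · -- no blow-up
    intro hRtop hcon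
    set T := R.toReal with hT
    have hT0 : 0 < T := ENNReal.toReal_pos hR.ne' hRtop
    have hFbcontT : ContinuousOn Fb (Icc 0 T) :=
      (ha_cont.mono (fun x hx => hx.1)).add (hb_cont.mono (fun x hx => hx.1))
    have hFbnonnegT : ∀ s ∈ Icc (0:ℝ) T, 0 ≤ Fb s :=
      fun s hs => add_nonneg (ha_nonneg s hs.1) (hb_nonneg s hs.1)
    have hGbcontT : ContinuousOn (Kfun N Fb) (Icc 0 T) := kfun_cont hT0.le hN1 hFbcontT hFbnonnegT
    have hPcont : ContinuousOn (fun x => ∫ t in (0:ℝ)..x, Kfun N Fb t) (Icc 0 T) := by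
      have hGb_int : IntegrableOn (Kfun N Fb) (uIcc 0 T) := by
        rw [uIcc_of_le hT0.le]
        exact hGbcontT.integrableOn_compact isCompact_Icc
      have := intervalIntegral.continuousOn_primitive_interval hGb_int
      rwa [uIcc_of_le hT0.le] at this
    obtain ⟨B, hB⟩ := isCompact_Icc.exists_bound_of_continuousOn hPcont
    have hfil : Ioo (0:ℝ) T ∈ nhdsWithin T (Iio T) := by
      rw [mem_nhdsWithin]
      exact ⟨Ioi 0, isOpen_Ioi, hT0, fun y hy => ⟨hy.1, hy.2⟩⟩
    have hub : ∀ᶠ x in nhdsWithin T (Iio T), (∫ s in u₀..(u x), 1 / (h s + g s)) ≤ B := by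
      filter_upwards [hfil] with x hx
      have hxR : ENNReal.ofReal x < R :=
        (ENNReal.ofReal_lt_iff_lt_toReal hx.1.le hRtop).mpr hx.2
      calc (∫ s in u₀..(u x), 1 / (h s + g s)) ≤ ∫ t in (0:ℝ)..x, Kfun N Fb t :=
            key x hx.1.le hxR
        _ ≤ B := by
            have := hB x ⟨hx.1.le, hx.2.le⟩
            rw [Real.norm_eq_abs] at this
            exact (le_abs_self _).trans this
    have htend : Tendsto (fun x => ∫ s in u₀..(u x), 1 / (h s + g s))
        (nhdsWithin T (Iio T)) atTop := hO.comp hcon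
    have hgt := htend.eventually_gt_atTop B
    have : ∃ x, (∫ s in u₀..(u x), 1 / (h s + g s)) ≤ B ∧
        B < ∫ s in u₀..(u x), 1 / (h s + g s) := by
      have := (hub.and hgt).exists
      exact this
    obtain ⟨x, h1, h2⟩ := this
    linarith
end
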